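/- arXiv:1901.05752 — 2 statements merged into one kernel-verified Lean document; each statement's English description precedes it below -/
import Mathlib

section
/- Let the problem have Property (P). Then the problem is strongly polynomially tractable if and only if it is polynomially tractable. -/
open Filter Real Set

/-- Information complexity: the number of multi-indices `(j₁,…,j_d) ∈ ℕ^d`
(here 0-indexed, so `Λ k j` stands for `λ(k+1, j+1)`) whose eigenvalue product exceeds `ε²`. -/
noncomputable def infoCount (Λ : ℕ → ℕ → ℝ) (d : ℕ) (ε : ℝ) : ℕ :=
  Nat.card {j : Fin d → ℕ | ε ^ 2 < ∏ k : Fin d, Λ k.val (j k)}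

/-- Strong polynomial tractability. -/
def IsSPT (Λ : ℕ → ℕ → ℝ) : Prop :=
  ∃ C p : ℝ, 0 ≤ C ∧ 0 ≤ p ∧ ∀ d : ℕ, 1 ≤ d → ∀ ε : ℝ, ε ∈ Set.Ioo (0 : ℝ) 1 →
    (infoCount Λ d ε : ℝ) ≤ C * ε ^ (-p)

/-- The exponent `p*` of strong polynomial tractability. -/
noncomputable def sptExponent (Λ : ℕ → ℕ → ℝ) : ℝ :=
  sInf {p : ℝ | 0 ≤ p ∧ ∃ C : ℝ, 0 ≤ C ∧ ∀ d : ℕ, 1 ≤ d → ∀ ε : ℝ, ε ∈ Set.Ioo (0 : ℝ) 1 →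
    (infoCount Λ d ε : ℝ) ≤ C * ε ^ (-p)}

/-- Polynomial tractability. -/
def IsPT (Λ : ℕ → ℕ → ℝ) : Prop :=
  ∃ C p q : ℝ, 0 ≤ C ∧ 0 ≤ p ∧ 0 ≤ q ∧ ∀ d : ℕ, 1 ≤ d → ∀ ε : ℝ, ε ∈ Set.Ioo (0 : ℝ) 1 →
    (infoCount Λ d ε : ℝ) ≤ C * (d : ℝ) ^ q * ε ^ (-p)

/-- Quasi-polynomial tractability. -/
def IsQPT (Λ : ℕ → ℕ → ℝ) : Prop :=
  ∃ C t : ℝ, 0 < C ∧ 0 < t ∧ ∀ d : ℕ, 1 ≤ d → ∀ ε : ℝ, ε ∈ Set.Ioo (0 : ℝ) 1 →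
    (infoCount Λ d ε : ℝ) ≤ C * Real.exp (t * (1 + Real.log d) * (1 + Real.log ε⁻¹))

/-- The exponent `t*` of quasi-polynomial tractability. -/
noncomputable def qptExponent (Λ : ℕ → ℕ → ℝ) : ℝ :=
  sInf {t : ℝ | 0 < t ∧ ∃ C : ℝ, 0 < C ∧ ∀ d : ℕ, 1 ≤ d → ∀ ε : ℝ, ε ∈ Set.Ioo (0 : ℝ) 1 →
    (infoCount Λ d ε : ℝ) ≤ C * Real.exp (t * (1 + Real.log d) * (1 + Real.log ε⁻¹))}

/-- The filter describing `ε⁻¹ + d → ∞` over pairs `(ε, d)` with `ε ∈ (0,1)` and `d ≥ 1`. -/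
noncomputable def wtFilter : Filter (ℝ × ℕ) :=
  (Filter.comap (fun p : ℝ × ℕ => p.1⁻¹ + (p.2 : ℝ)) Filter.atTop) ⊓
    Filter.principal {p : ℝ × ℕ | p.1 ∈ Set.Ioo (0 : ℝ) 1 ∧ 1 ≤ p.2}

/-- `(s,t)`-weak tractability: `ln n(ε,d) / (ε^{-s} + d^t) → 0` as `ε⁻¹ + d → ∞`. -/
def IsWT (Λ : ℕ → ℕ → ℝ) (s t : ℝ) : Prop :=
  Filter.Tendsto
    (fun p : ℝ × ℕ => Real.log (infoCount Λ p.2 p.1) / (p.1 ^ (-s) + (p.2 : ℝ) ^ t))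
    wtFilter (nhds 0)

/-- Uniform weak tractability. -/
def IsUWT (Λ : ℕ → ℕ → ℝ) : Prop := ∀ s t : ℝ, 0 < s → 0 < t → IsWT Λ s t

/-- The problem suffers from the curse of dimensionality. -/
def SuffersCurse (Λ : ℕ → ℕ → ℝ) : Prop :=
  ∃ C ε₀ α : ℝ, 0 < C ∧ 0 < ε₀ ∧ 0 < α ∧ ∀ ε : ℝ, 0 < ε → ε ≤ ε₀ →
    {d : ℕ | C * (1 + α) ^ d ≤ (infoCount Λ d ε : ℝ)}.Infinite

/-- Condition (3) of Property (P) for a given `τ > 0`: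
`H(k,τ) = ∑_{j≥2} (λ(k,j)/λ(k,2))^τ` is finite for each `k` and
`sup_k H(k,τ) = H(1,τ)` (equivalently `H(k,τ) ≤ H(1,τ)` for all `k`). -/
def Cond3 (Λ : ℕ → ℕ → ℝ) (τ : ℝ) : Prop :=
  0 < τ ∧ (∀ k, Summable fun j : ℕ => (Λ k (j + 1) / Λ k 1) ^ τ) ∧
    ∀ k, (∑' j : ℕ, (Λ k (j + 1) / Λ k 1) ^ τ) ≤ ∑' j : ℕ, (Λ 0 (j + 1) / Λ 0 1) ^ τ

/-- `τ₀`: the infimum of all `τ` satisfying Condition (3). -/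
noncomputable def tau0 (Λ : ℕ → ℕ → ℝ) : ℝ := sInf {τ : ℝ | Cond3 Λ τ}

/-- Property (P): each sequence `λ(k,·)` is nonincreasing and nonnegative with `λ(k,1) = 1`
and `λ(k,2) > 0`, `h_k = λ(k,2)` is nonincreasing, and Condition (3) holds for some `τ > 0`. -/
structure PropertyP (Λ : ℕ → ℕ → ℝ) : Prop where
  nonneg : ∀ k j, 0 ≤ Λ k j
  anti : ∀ k, Antitone (Λ k)
  first : ∀ k, Λ k 0 = 1
  second_pos : ∀ k, 0 < Λ k 1
  h_anti : Antitone fun k => Λ k 1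
  cond3 : ∃ τ : ℝ, Cond3 Λ τ

section Helpers

variable {Λ : ℕ → ℕ → ℝ}

lemma lam_le_one (hP : PropertyP Λ) (k j : ℕ) : Λ k j ≤ 1 :=
  (hP.first k) ▸ hP.anti k (Nat.zero_le j)

lemma prod_le_single (hP : PropertyP Λ) {d : ℕ} (j : Fin d → ℕ) (k0 : Fin d) :
    ∏ k : Fin d, Λ k.val (j k) ≤ Λ k0.val (j k0) := by
  rw [← Finset.mul_prod_erase Finset.univ _ (Finset.mem_univ k0)]
  calc Λ k0.val (j k0) * ∏ k ∈ Finset.univ.erase k0, Λ k.val (j k)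
      ≤ Λ k0.val (j k0) * 1 := by
        apply mul_le_mul_of_nonneg_left _ (hP.nonneg _ _)
        exact Finset.prod_le_one (fun k _ => hP.nonneg _ _) (fun k _ => lam_le_one hP _ _)
    _ = Λ k0.val (j k0) := mul_one _

lemma exists_bound (hP : PropertyP Λ) {τ : ℝ} (hτ : Cond3 Λ τ) (k : ℕ) {c : ℝ} (hc : 0 < c) :
    ∃ B : ℕ, 1 ≤ B ∧ ∀ n, B ≤ n → Λ k n ≤ c := by
  set c' := min c (Λ k 1) with hc'
  have hc'pos : 0 < c' := lt_min hc (hP.second_pos k)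
  have hrpos : 0 < (c' / Λ k 1) ^ τ := Real.rpow_pos_of_pos (div_pos hc'pos (hP.second_pos k)) τ
  have htend := (hτ.2.1 k).tendsto_atTop_zero
  obtain ⟨N, hN⟩ := (htend.eventually (eventually_lt_nhds hrpos)).exists_forall_of_atTop
  refine ⟨N + 1, Nat.le_add_left 1 N, fun n hn => ?_⟩
  obtain ⟨m, rfl⟩ : ∃ m, n = m + 1 := ⟨n - 1, by omega⟩
  have hm : N ≤ m := by omega
  have := hN m hm
  by_contra hcon
  push_neg at hcon
  have hle : c' / Λ k 1 ≤ Λ k (m + 1) / Λ k 1 := by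
    have : c' ≤ Λ k (m + 1) := le_trans (min_le_left _ _) hcon.le
    gcongr
    exact (hP.second_pos k).le
  have := Real.rpow_le_rpow (le_of_lt (div_pos hc'pos (hP.second_pos k))) hle (le_of_lt hτ.1)
  linarith [hN m hm]

end Helpers

section Helpers2
variable {Λ : ℕ → ℕ → ℝ}

lemma setT_subset (hP : PropertyP Λ) {τ : ℝ} (hτ : Cond3 Λ τ) (d : ℕ) {ε : ℝ} (hε : 0 < ε) :
    ∃ B : Fin d → ℕ, (∀ k, 1 ≤ B k) ∧
      {j : Fin d → ℕ | ε ^ 2 < ∏ k : Fin d, Λ k.val (j k)} ⊆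
        ↑(Fintype.piFinset fun k => Finset.range (B k)) := by
  have hε2 : 0 < ε ^ 2 := by positivity
  choose B hB1 hB2 using fun k : Fin d => exists_bound hP hτ k.val hε2
  refine ⟨B, hB1, fun j hj => ?_⟩
  simp only [Set.mem_setOf_eq] at hj
  simp only [Finset.coe_sort_coe, Finset.mem_coe, Fintype.mem_piFinset, Finset.mem_range]
  intro k
  by_contra hcon
  push_neg at hcon
  have := hB2 k (j k) hcon
  have := prod_le_single hP j k
  linarith

lemma setT_finite (hP : PropertyP Λ) {τ : ℝ} (hτ : Cond3 Λ τ) (d : ℕ) {ε : ℝ} (hε : 0 < ε) :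
    {j : Fin d → ℕ | ε ^ 2 < ∏ k : Fin d, Λ k.val (j k)}.Finite := by
  obtain ⟨B, _, hsub⟩ := setT_subset hP hτ d hε
  exact Set.Finite.subset (Finset.finite_toSet _) hsub

lemma infoCount_upper (hP : PropertyP Λ) {τs τ : ℝ} (hτs : Cond3 Λ τs) (hττ : τs ≤ τ)
    (d : ℕ) {ε : ℝ} (hε0 : 0 < ε) :
    (infoCount Λ d ε : ℝ) ≤ ε ^ (-(2 * τ)) *
      ∏ k : Fin d, (1 + Λ k.val 1 ^ τ * ∑' j : ℕ, (Λ 0 (j + 1) / Λ 0 1) ^ τs) := by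
  set H₁ : ℝ := ∑' j : ℕ, (Λ 0 (j + 1) / Λ 0 1) ^ τs with hH₁
  have hτpos : 0 < τ := lt_of_lt_of_le hτs.1 hττ
  have hH₁0 : 0 ≤ H₁ := tsum_nonneg fun j => Real.rpow_nonneg (div_nonneg (hP.nonneg _ _) (hP.second_pos 0).le) _
  obtain ⟨B, hB1, hsub⟩ := setT_subset hP hτs d hε0
  have hTfin := Set.Finite.subset (Finset.finite_toSet _) hsub
  have hcard : (infoCount Λ d ε : ℝ) = (hTfin.toFinset.card : ℝ) := by
    rw [infoCount, Nat.card_coe_set_eq, Set.ncard_eq_toFinset_card _ hTfin]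
  -- per-element lower bound
  have h1 : ∀ j ∈ hTfin.toFinset, ε ^ (2 * τ) ≤ ∏ k : Fin d, Λ k.val (j k) ^ τ := by
    intro j hj
    rw [Set.Finite.mem_toFinset] at hj
    have hj' : ε ^ 2 < ∏ k : Fin d, Λ k.val (j k) := hj
    have e1 : ε ^ (2 * τ) = (ε ^ 2) ^ τ := by
      rw [Real.rpow_mul hε0.le]
      norm_num [Real.rpow_natCast]
    rw [e1, Real.finset_prod_rpow _ _ (fun k _ => hP.nonneg _ _)]
    exact Real.rpow_le_rpow (by positivity) hj'.le hτpos.le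
  have hε2τ : 0 < ε ^ (2 * τ) := Real.rpow_pos_of_pos hε0 _
  have h2 : (hTfin.toFinset.card : ℝ) * ε ^ (2 * τ) ≤
      ∑ j ∈ hTfin.toFinset, ∏ k : Fin d, Λ k.val (j k) ^ τ := by
    calc (hTfin.toFinset.card : ℝ) * ε ^ (2 * τ)
        = ∑ _j ∈ hTfin.toFinset, ε ^ (2 * τ) := by rw [Finset.sum_const, nsmul_eq_mul]
      _ ≤ _ := Finset.sum_le_sum h1
  have h3 : ∑ j ∈ hTfin.toFinset, ∏ k : Fin d, Λ k.val (j k) ^ τ ≤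
      ∑ j ∈ Fintype.piFinset (fun k => Finset.range (B k)), ∏ k : Fin d, Λ k.val (j k) ^ τ := by
    apply Finset.sum_le_sum_of_subset_of_nonneg
    · intro j hj
      rw [Set.Finite.mem_toFinset] at hj
      exact hsub hj
    · intro j _ _
      exact Finset.prod_nonneg fun k _ => Real.rpow_nonneg (hP.nonneg _ _) _
  have h4 : ∑ j ∈ Fintype.piFinset (fun k => Finset.range (B k)), ∏ k : Fin d, Λ k.val (j k) ^ τ
      = ∏ k : Fin d, ∑ n ∈ Finset.range (B k), Λ k.val n ^ τ :=
    (Finset.prod_univ_sum (fun k : Fin d => Finset.range (B k)) (fun k n => Λ k.val n ^ τ)).symm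
  have h5 : ∀ k : Fin d, ∑ n ∈ Finset.range (B k), Λ k.val n ^ τ ≤ 1 + Λ k.val 1 ^ τ * H₁ := by
    intro k
    obtain ⟨B', hB'⟩ : ∃ B', B k = B' + 1 := ⟨B k - 1, by have := hB1 k; omega⟩
    rw [hB', Finset.sum_range_succ']
    have hf0 : Λ k.val 0 ^ τ = 1 := by rw [hP.first, Real.one_rpow]
    rw [hf0]
    have hk1 : 0 < Λ k.val 1 := hP.second_pos _
    have hterm : ∀ i, Λ k.val (i + 1) ^ τ ≤ Λ k.val 1 ^ τ * (Λ k.val (i + 1) / Λ k.val 1) ^ τs := by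
      intro i
      have hr0 : 0 ≤ Λ k.val (i + 1) / Λ k.val 1 := div_nonneg (hP.nonneg _ _) hk1.le
      have hr1 : Λ k.val (i + 1) / Λ k.val 1 ≤ 1 := by
        rw [div_le_one hk1]
        exact hP.anti _ (by omega)
      have heq : Λ k.val (i + 1) ^ τ = Λ k.val 1 ^ τ * (Λ k.val (i + 1) / Λ k.val 1) ^ τ := by
        rw [← Real.mul_rpow hk1.le hr0, mul_div_cancel₀ _ hk1.ne']
      rw [heq]
      apply mul_le_mul_of_nonneg_left _ (Real.rpow_nonneg hk1.le _)
      rcases eq_or_lt_of_le hr0 with h | h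
      · rw [← h, Real.zero_rpow hτpos.ne', Real.zero_rpow hτs.1.ne']
      · exact Real.rpow_le_rpow_of_exponent_ge h hr1 hττ
    calc ∑ i ∈ Finset.range B', Λ k.val (i + 1) ^ τ + 1
        ≤ ∑ i ∈ Finset.range B', Λ k.val 1 ^ τ * (Λ k.val (i + 1) / Λ k.val 1) ^ τs + 1 := by
          gcongr with i hi
          exact hterm i
      _ = Λ k.val 1 ^ τ * (∑ i ∈ Finset.range B', (Λ k.val (i + 1) / Λ k.val 1) ^ τs) + 1 := by
          rw [Finset.mul_sum]
      _ ≤ Λ k.val 1 ^ τ * H₁ + 1 := by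
          refine add_le_add ?_ le_rfl
          apply mul_le_mul_of_nonneg_left _ (Real.rpow_nonneg hk1.le _)
          calc (∑ i ∈ Finset.range B', (Λ k.val (i + 1) / Λ k.val 1) ^ τs)
              ≤ ∑' j : ℕ, (Λ k.val (j + 1) / Λ k.val 1) ^ τs :=
                Summable.sum_le_tsum _ (fun i _ => Real.rpow_nonneg (div_nonneg (hP.nonneg _ _) hk1.le) _) (hτs.2.1 _)
            _ ≤ H₁ := hτs.2.2 _
      _ = 1 + Λ k.val 1 ^ τ * H₁ := by ring
  have h6 : ∏ k : Fin d, ∑ n ∈ Finset.range (B k), Λ k.val n ^ τ ≤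
      ∏ k : Fin d, (1 + Λ k.val 1 ^ τ * H₁) := by
    apply Finset.prod_le_prod
    · intro k _
      exact Finset.sum_nonneg fun n _ => Real.rpow_nonneg (hP.nonneg _ _) _
    · exact fun k _ => h5 k
  have key : (hTfin.toFinset.card : ℝ) * ε ^ (2 * τ) ≤ ∏ k : Fin d, (1 + Λ k.val 1 ^ τ * H₁) := by
    calc (hTfin.toFinset.card : ℝ) * ε ^ (2 * τ) ≤ _ := h2
      _ ≤ _ := h3
      _ = _ := h4
      _ ≤ _ := h6
  rw [hcard, Real.rpow_neg hε0.le, inv_mul_eq_div, le_div_iff₀ hε2τ]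
  exact key
end Helpers2

section Lower
variable {Λ : ℕ → ℕ → ℝ}

lemma infoCount_lower (hP : PropertyP Λ) {τ : ℝ} (hτ : Cond3 Λ τ)
    (d m : ℕ) (hm : 1 ≤ m) (hmd : m ≤ d) {ε x : ℝ} (hε : 0 < ε) (hx : 0 < x)
    (hεx : ε ^ 2 ≤ x ^ m) (hh : ∀ k : Fin d, x < Λ k.val 1) :
    (d.choose m : ℝ) ≤ (infoCount Λ d ε : ℝ) := by
  set T := {j : Fin d → ℕ | ε ^ 2 < ∏ k : Fin d, Λ k.val (j k)} with hT
  have hTfin : T.Finite := setT_finite hP hτ d hε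
  set f : Finset (Fin d) → (Fin d → ℕ) := fun S => fun k => if k ∈ S then 1 else 0 with hf
  have hmem : ∀ S ∈ Finset.univ.powersetCard m, f S ∈ T := by
    intro S hS
    rw [Finset.mem_powersetCard] at hS
    have hSne : S.Nonempty := by
      rw [← Finset.card_pos, hS.2]; omega
    have hprod : ∏ k : Fin d, Λ k.val (f S k) = ∏ k ∈ S, Λ k.val 1 := by
      rw [show ∏ k : Fin d, Λ k.val (f S k) = ∏ k : Fin d, (if k ∈ S then Λ k.val 1 else 1) by
        apply Finset.prod_congr rfl
        intro k _
        by_cases hk : k ∈ S <;> simp [hf, hk, hP.first]]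
      rw [Finset.prod_ite_mem, Finset.univ_inter]
    have hlt : x ^ m < ∏ k ∈ S, Λ k.val 1 := by
      calc x ^ m = ∏ _k ∈ S, x := by rw [Finset.prod_const, hS.2]
        _ < ∏ k ∈ S, Λ k.val 1 :=
          Finset.prod_lt_prod_of_nonempty (fun k _ => hx) (fun k _ => hh k) hSne
    show ε ^ 2 < ∏ k : Fin d, Λ k.val (f S k)
    rw [hprod]
    exact lt_of_le_of_lt hεx hlt
  have hinj : Set.InjOn f ((Finset.univ.powersetCard m : Finset (Finset (Fin d))) : Set (Finset (Fin d))) := by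
    intro S _ S' _ hSS'
    ext k
    have := congrFun hSS' k
    by_cases h1 : k ∈ S <;> by_cases h2 : k ∈ S' <;> simp [hf, h1, h2] at this ⊢
  have hcard : ((Finset.univ.powersetCard m (α := Fin d)).image f).card = d.choose m := by
    rw [Finset.card_image_of_injOn hinj, Finset.card_powersetCard, Finset.card_univ,
      Fintype.card_fin]
  have hsub : ↑((Finset.univ.powersetCard m (α := Fin d)).image f) ⊆ T := by
    intro j hj
    simp only [Finset.coe_image, Set.mem_image, Finset.mem_coe] at hj
    obtain ⟨S, hS, rfl⟩ := hj
    exact hmem S hS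
  have : ((Finset.univ.powersetCard m (α := Fin d)).image f).card ≤ Nat.card T := by
    rw [Nat.card_coe_set_eq, ← Set.ncard_coe_finset]
    exact Set.ncard_le_ncard hsub hTfin
  rw [hcard] at this
  exact_mod_cast this

end Lower

section ClaimA
variable {Λ : ℕ → ℕ → ℝ}

lemma claimA (hP : PropertyP Λ) {τ : ℝ} (hτ : Cond3 Λ τ) (hPT : IsPT Λ) :
    ∃ C₂ β : ℝ, 1 ≤ C₂ ∧ 1 ≤ β ∧ ∀ x : ℝ, x ∈ Set.Ioo (0:ℝ) 1 → ∀ n : ℕ, 1 ≤ n →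
      (∀ k, k < n → x < Λ k 1) → (n : ℝ) ≤ C₂ * x ^ (-β) := by
  obtain ⟨C, p, q, hC, hp0, hq0, hPTb⟩ := hPT
  set m : ℕ := ⌈q⌉₊ + 1 with hm
  have hm1 : 1 ≤ m := Nat.le_add_left 1 _
  have hqm : q < (m : ℝ) := by
    calc q ≤ (⌈q⌉₊ : ℝ) := Nat.le_ceil q
      _ < (m : ℝ) := by exact_mod_cast Nat.lt_succ_self _
  have hmq : (0:ℝ) < (m : ℝ) - q := by linarith
  set γ : ℝ := p * m / 2 with hγ
  have hγ0 : 0 ≤ γ := by positivity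
  set K : ℝ := (2 * (m:ℝ)) ^ m * C with hK
  have hK0 : 0 ≤ K := by positivity
  set β₀ : ℝ := γ / ((m:ℝ) - q) with hβ₀
  have hβ₀0 : 0 ≤ β₀ := by positivity
  set β : ℝ := max β₀ 1 with hβ
  set C₂ : ℝ := max (max (K ^ (1/((m:ℝ)-q))) (2*(m:ℝ))) 1 with hC₂
  have hC₂1 : (1:ℝ) ≤ C₂ := le_max_right _ _
  refine ⟨C₂, β, hC₂1, le_max_right _ _, ?_⟩
  rintro x ⟨hx0, hx1⟩ n hn hxn
  have hxβ : (1:ℝ) ≤ x ^ (-β) := by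
    apply le_of_lt
    rw [Real.one_lt_rpow_iff_of_pos hx0]
    right
    constructor
    · exact hx1
    · simp only [hβ, neg_lt, neg_zero]; positivity
  by_cases hcase : n < 2 * m
  · calc (n : ℝ) ≤ 2 * (m:ℝ) := by exact_mod_cast hcase.le
      _ ≤ C₂ := le_trans (le_max_right _ _) (le_max_left _ _)
      _ = C₂ * 1 := (mul_one _).symm
      _ ≤ C₂ * x ^ (-β) := by
        apply mul_le_mul_of_nonneg_left hxβ (by linarith)
  · push_neg at hcase
    set ε : ℝ := x ^ ((m:ℝ)/2) with hε
    have hε0 : 0 < ε := Real.rpow_pos_of_pos hx0 _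
    have hε1 : ε < 1 := Real.rpow_lt_one hx0.le hx1 (by positivity)
    have hε2 : ε ^ 2 = x ^ m := by
      rw [hε, sq, ← Real.rpow_add hx0, ← Real.rpow_natCast x m]
      norm_num
    have hlow := infoCount_lower hP hτ n m hm1 (by omega) hε0 hx0 hε2.le
      (fun k => hxn k.val k.isLt)
    have hup := hPTb n (by omega) ε ⟨hε0, hε1⟩
    have hεp : ε ^ (-p) = x ^ (-γ) := by
      rw [hε, ← Real.rpow_mul hx0.le]
      congr 1
      rw [hγ]; ring
    have h1 : (n.choose m : ℝ) ≤ C * (n:ℝ) ^ q * x ^ (-γ) := by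
      rw [← hεp]; exact le_trans hlow hup
    have hn0 : (0:ℝ) < (n:ℝ) := by exact_mod_cast Nat.lt_of_lt_of_le Nat.zero_lt_one hn
    -- (n:ℝ)^m ≤ (2m)^m * choose n m
    have hnat : n ≤ 2 * (n + 1 - m) := by omega
    have hstep : ((n:ℝ)) ^ m ≤ (2*(m:ℝ)) ^ m * (n.choose m : ℝ) := by
      have ha : ((n:ℝ)) ^ m ≤ ((2 * (n + 1 - m) : ℕ) : ℝ) ^ m := by
        apply pow_le_pow_left₀ (Nat.cast_nonneg n)
        exact_mod_cast hnat
      have hb : (((n + 1 - m : ℕ)) ^ m : ℝ) ≤ (m.factorial : ℝ) * (n.choose m : ℝ) := by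
        have := Nat.pow_le_choose m n (α := ℝ)
        rw [div_le_iff₀ (by exact_mod_cast m.factorial_pos)] at this
        calc (((n + 1 - m : ℕ)) ^ m : ℝ)
            ≤ (n.choose m : ℝ) * (m.factorial : ℝ) := by push_cast at this ⊢; exact this
          _ = _ := mul_comm _ _
      have hc' : (m.factorial : ℝ) ≤ (m:ℝ) ^ m := by exact_mod_cast m.factorial_le_pow
      calc ((n:ℝ)) ^ m ≤ ((2 * (n + 1 - m) : ℕ) : ℝ) ^ m := ha
        _ = (2:ℝ) ^ m * (((n + 1 - m : ℕ)) ^ m : ℝ) := by push_cast; rw [mul_pow]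
        _ ≤ (2:ℝ) ^ m * ((m.factorial : ℝ) * (n.choose m : ℝ)) := by
            apply mul_le_mul_of_nonneg_left hb (by positivity)
        _ ≤ (2:ℝ) ^ m * ((m:ℝ) ^ m * (n.choose m : ℝ)) := by
            apply mul_le_mul_of_nonneg_left _ (by positivity)
            apply mul_le_mul_of_nonneg_right hc' (Nat.cast_nonneg _)
        _ = (2*(m:ℝ)) ^ m * (n.choose m : ℝ) := by rw [mul_pow]; ring
    have h2 : ((n:ℝ)) ^ m ≤ K * (n:ℝ) ^ q * x ^ (-γ) := by
      calc ((n:ℝ)) ^ m ≤ (2*(m:ℝ)) ^ m * (n.choose m : ℝ) := hstep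
        _ ≤ (2*(m:ℝ)) ^ m * (C * (n:ℝ) ^ q * x ^ (-γ)) := by
            apply mul_le_mul_of_nonneg_left h1 (by positivity)
        _ = K * (n:ℝ) ^ q * x ^ (-γ) := by rw [hK]; ring
    have h3 : (n:ℝ) ^ ((m:ℝ) - q) ≤ K * x ^ (-γ) := by
      rw [Real.rpow_sub hn0, div_le_iff₀ (Real.rpow_pos_of_pos hn0 q)]
      calc (n:ℝ) ^ (m:ℝ) = ((n:ℝ)) ^ m := Real.rpow_natCast n m
        _ ≤ K * (n:ℝ) ^ q * x ^ (-γ) := h2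
        _ = K * x ^ (-γ) * (n:ℝ) ^ q := by ring
    have h4 : (n:ℝ) ≤ K ^ (1/((m:ℝ)-q)) * x ^ (-β₀) := by
      have : (n:ℝ) = ((n:ℝ) ^ ((m:ℝ) - q)) ^ (1/((m:ℝ)-q)) := by
        rw [← Real.rpow_mul hn0.le, mul_one_div, div_self hmq.ne', Real.rpow_one]
      rw [this]
      calc ((n:ℝ) ^ ((m:ℝ) - q)) ^ (1/((m:ℝ)-q))
          ≤ (K * x ^ (-γ)) ^ (1/((m:ℝ)-q)) := by
            apply Real.rpow_le_rpow (Real.rpow_nonneg hn0.le _) h3 (by positivity)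
        _ = K ^ (1/((m:ℝ)-q)) * (x ^ (-γ)) ^ (1/((m:ℝ)-q)) :=
            Real.mul_rpow hK0 (Real.rpow_nonneg hx0.le _)
        _ = K ^ (1/((m:ℝ)-q)) * x ^ (-β₀) := by
            rw [← Real.rpow_mul hx0.le]
            congr 2
            rw [hβ₀]; ring
    calc (n:ℝ) ≤ K ^ (1/((m:ℝ)-q)) * x ^ (-β₀) := h4
      _ ≤ C₂ * x ^ (-β) := by
        apply mul_le_mul
        · exact le_trans (le_max_left _ _) (le_max_left _ _)
        · exact Real.rpow_le_rpow_of_exponent_ge hx0 hx1.le (by simp [hβ])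
        · exact Real.rpow_nonneg hx0.le _
        · linarith

end ClaimA

section Final
variable {Λ : ℕ → ℕ → ℝ}

lemma pt_to_spt (hP : PropertyP Λ) (hPT : IsPT Λ) : IsSPT Λ := by
  obtain ⟨τs, hτs⟩ := hP.cond3
  obtain ⟨C₂, β, hC₂1, hβ1, hA⟩ := claimA hP hτs hPT
  have hβ0 : 0 < β := lt_of_lt_of_le zero_lt_one hβ1
  have hC₂0 : 0 < C₂ := lt_of_lt_of_le zero_lt_one hC₂1
  set τ : ℝ := max τs (2 * β) with hτdef
  have hττ : τs ≤ τ := le_max_left _ _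
  have hτpos : 0 < τ := lt_of_lt_of_le hτs.1 hττ
  have hτ2β : 2 * β ≤ τ := le_max_right _ _
  -- decay of Λ k 1
  have hdecay : ∀ k : ℕ, C₂ < (k : ℝ) + 1 → Λ k 1 ≤ (C₂ / ((k : ℝ) + 1)) ^ (1 / β) := by
    intro k hk
    by_contra hcon
    push_neg at hcon
    have hk10 : (0:ℝ) < (k:ℝ) + 1 := by positivity
    have hdiv0 : 0 < C₂ / ((k:ℝ)+1) := div_pos hC₂0 hk10
    have hdiv1 : C₂ / ((k:ℝ)+1) < 1 := (div_lt_one hk10).2 hk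
    set y : ℝ := (C₂ / ((k : ℝ) + 1)) ^ (1 / β) with hy
    have hy0 : 0 < y := Real.rpow_pos_of_pos hdiv0 _
    obtain ⟨y', hyy', hy'h⟩ := exists_between hcon
    have hy'0 : 0 < y' := lt_trans hy0 hyy'
    have hy'1 : y' < 1 := lt_of_lt_of_le hy'h (lam_le_one hP k 1)
    have hall : ∀ k', k' < k + 1 → y' < Λ k' 1 := by
      intro k' hk'
      calc y' < Λ k 1 := hy'h
        _ ≤ Λ k' 1 := hP.h_anti (by omega)
    have hbound := hA y' ⟨hy'0, hy'1⟩ (k+1) (by omega) hall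
    have hyβ : y ^ (-β) = ((k:ℝ)+1) / C₂ := by
      rw [hy, ← Real.rpow_mul hdiv0.le, one_div, show β⁻¹ * -β = -1 by field_simp,
        Real.rpow_neg_one, inv_div]
    have hstrict : y' ^ (-β) < y ^ (-β) :=
      Real.rpow_lt_rpow_of_neg hy0 hyy' (by linarith)
    have : ((k:ℝ)+1) ≤ C₂ * y' ^ (-β) := by push_cast at hbound ⊢; linarith
    have hfin : C₂ * y ^ (-β) = (k:ℝ)+1 := by
      rw [hyβ, mul_div_cancel₀ _ hC₂0.ne']
    nlinarith [mul_lt_mul_of_pos_left hstrict hC₂0]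
  -- summability of (Λ k 1)^τ
  set K₀ : ℕ := ⌈C₂⌉₊ + 1 with hK₀
  have hK₀C : ∀ k : ℕ, C₂ < (k + K₀ : ℕ) + 1 := by
    intro k
    have : C₂ ≤ (⌈C₂⌉₊ : ℝ) := Nat.le_ceil _
    have hK₀r : (K₀ : ℝ) = (⌈C₂⌉₊ : ℝ) + 1 := by rw [hK₀, Nat.cast_add, Nat.cast_one]
    push_cast
    linarith [Nat.cast_nonneg (α := ℝ) k]
  have hsum : Summable fun k : ℕ => Λ k 1 ^ τ := by
    rw [← summable_nat_add_iff K₀]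
    have hmaj : Summable fun k : ℕ => C₂ ^ (τ/β) * (((k + K₀ : ℕ) : ℝ) + 1) ^ (-(2:ℝ)) := by
      apply Summable.mul_left
      have hbase : Summable fun n : ℕ => ((n:ℝ)) ^ (-(2:ℝ)) :=
        Real.summable_nat_rpow.2 (by norm_num)
      have := (summable_nat_add_iff (f := fun n : ℕ => ((n:ℝ)) ^ (-(2:ℝ))) (K₀ + 1)).2 hbase
      apply this.congr
      intro k
      congr 1
      push_cast
      ring
    apply Summable.of_nonneg_of_le (fun k => Real.rpow_nonneg (hP.nonneg _ _) _) _ hmaj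
    intro k
    set k' : ℕ := k + K₀ with hk'
    have hc : C₂ < (k' : ℝ) + 1 := hK₀C k
    have hk'10 : (0:ℝ) < (k':ℝ) + 1 := by positivity
    have hdiv0 : 0 ≤ C₂ / ((k':ℝ)+1) := le_of_lt (div_pos hC₂0 hk'10)
    calc Λ k' 1 ^ τ ≤ ((C₂ / ((k':ℝ)+1)) ^ (1/β)) ^ τ :=
          Real.rpow_le_rpow (hP.nonneg _ _) (hdecay k' hc) hτpos.le
      _ = (C₂ / ((k':ℝ)+1)) ^ (τ/β) := by
          rw [← Real.rpow_mul hdiv0]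
          congr 1
          field_simp
      _ = C₂ ^ (τ/β) * (((k':ℝ)+1)) ^ (-(τ/β)) := by
          rw [Real.div_rpow hC₂0.le hk'10.le, Real.rpow_neg hk'10.le, div_eq_mul_inv]
      _ ≤ C₂ ^ (τ/β) * (((k':ℝ)+1)) ^ (-(2:ℝ)) := by
          apply mul_le_mul_of_nonneg_left _ (Real.rpow_nonneg hC₂0.le _)
          apply Real.rpow_le_rpow_of_exponent_le (by linarith [Nat.cast_nonneg (α := ℝ) k'])
          rw [neg_le_neg_iff]
          rw [le_div_iff₀ hβ0]
          linarith
  -- conclusion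
  set H₁ : ℝ := ∑' j : ℕ, (Λ 0 (j + 1) / Λ 0 1) ^ τs with hH₁
  have hH₁0 : 0 ≤ H₁ :=
    tsum_nonneg fun j => Real.rpow_nonneg (div_nonneg (hP.nonneg _ _) (hP.second_pos 0).le) _
  set S : ℝ := ∑' k : ℕ, Λ k 1 ^ τ with hS
  refine ⟨Real.exp (H₁ * S), 2 * τ, (Real.exp_pos _).le, by positivity, ?_⟩
  intro d hd ε hε
  have hprod : ∏ k : Fin d, (1 + Λ k.val 1 ^ τ * H₁) ≤ Real.exp (H₁ * S) := by
    calc ∏ k : Fin d, (1 + Λ k.val 1 ^ τ * H₁)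
        ≤ ∏ k : Fin d, Real.exp (Λ k.val 1 ^ τ * H₁) := by
          apply Finset.prod_le_prod
          · intro k _
            have := Real.rpow_nonneg (hP.nonneg k.val 1) τ
            nlinarith
          · intro k _
            have := Real.add_one_le_exp (Λ k.val 1 ^ τ * H₁)
            linarith
      _ = Real.exp (∑ k : Fin d, Λ k.val 1 ^ τ * H₁) := (Real.exp_sum _ _).symm
      _ ≤ Real.exp (H₁ * S) := by
          apply Real.exp_le_exp.2
          rw [← Finset.sum_mul]
          rw [mul_comm H₁ S]
          apply mul_le_mul_of_nonneg_right _ hH₁0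
          rw [Fin.sum_univ_eq_sum_range (fun k => Λ k 1 ^ τ) d]
          exact Summable.sum_le_tsum _ (fun i _ => Real.rpow_nonneg (hP.nonneg _ _) _) hsum
  calc (infoCount Λ d ε : ℝ)
      ≤ ε ^ (-(2*τ)) * ∏ k : Fin d, (1 + Λ k.val 1 ^ τ * H₁) :=
        infoCount_upper hP hτs hττ d hε.1
    _ ≤ ε ^ (-(2*τ)) * Real.exp (H₁ * S) := by
        apply mul_le_mul_of_nonneg_left hprod (Real.rpow_nonneg hε.1.le _)
    _ = Real.exp (H₁ * S) * ε ^ (-(2*τ)) := mul_comm _ _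

end Final

/-- Under Property (P), strong polynomial tractability is equivalent to
polynomial tractability. -/
theorem spt_iff_pt (Λ : ℕ → ℕ → ℝ) (hP : PropertyP Λ) :
    IsSPT Λ ↔ IsPT Λ := by
  constructor
  · rintro ⟨C, p, hC, hp, h⟩
    refine ⟨C, p, 0, hC, hp, le_refl 0, fun d hd ε hε => ?_⟩
    rw [Real.rpow_zero, mul_one]
    exact h d hd ε hε
  · exact pt_to_spt hP
end

section
/- Let the problem have Property (P). Since (h_k) is nonincreasing, the limit B := lim_{d→∞} ln(h_d^{-1}) exists in [0,∞]. The problem is quasi-polynomially tractable if and only if B > 0, which is equivalent to the condition that h_k is not identically equal to 1. -/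
open Filter Real Set
open scoped ENNReal

section QPTAux

open Filter Real Set
open scoped ENNReal

theorem tsum_pi_prod : ∀ (d : ℕ) (f : Fin d → ℕ → ℝ≥0∞),
    (∑' j : Fin d → ℕ, ∏ k, f k (j k)) = ∏ k, ∑' n, f k n := by
  intro d
  induction d with
  | zero =>
    intro f
    rw [tsum_eq_single (default : Fin 0 → ℕ) (fun b hb => absurd (Subsingleton.elim b default) hb)]
    simp
  | succ d ih =>
    intro f
    rw [← Equiv.tsum_eq (Fin.consEquiv fun _ => ℕ) (fun j => ∏ k, f k (j k))]
    simp only [Fin.consEquiv_apply]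
    rw [ENNReal.tsum_prod']
    simp only [Fin.prod_univ_succ, Fin.cons_zero, Fin.cons_succ]
    calc (∑' (a : ℕ) (b : Fin d → ℕ), f 0 a * ∏ i : Fin d, f i.succ (b i))
        = ∑' (a : ℕ), f 0 a * ∑' (b : Fin d → ℕ), ∏ i : Fin d, f i.succ (b i) := by
          congr 1; ext a; rw [ENNReal.tsum_mul_left]
      _ = (∑' n, f 0 n) * ∏ i : Fin d, ∑' n, f i.succ n := by
          rw [ENNReal.tsum_mul_right, ih]

variable {Λ : ℕ → ℕ → ℝ}

theorem h_le_one (hP : PropertyP Λ) (k : ℕ) : Λ k 1 ≤ 1 :=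
  (hP.first k) ▸ hP.anti k (by norm_num)

theorem one_le_H {τ : ℝ} (hP : PropertyP Λ) (hc : Cond3 Λ τ) :
    1 ≤ ∑' j : ℕ, (Λ 0 (j + 1) / Λ 0 1) ^ τ := by
  have h0 : (Λ 0 (0 + 1) / Λ 0 1) ^ τ = 1 := by
    rw [div_self (hP.second_pos 0).ne', Real.one_rpow]
  calc (1 : ℝ) = (Λ 0 (0 + 1) / Λ 0 1) ^ τ := h0.symm
    _ ≤ ∑' j : ℕ, (Λ 0 (j + 1) / Λ 0 1) ^ τ :=
      Summable.le_tsum (hc.2.1 0) 0 fun j _ =>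
        Real.rpow_nonneg (div_nonneg (hP.nonneg 0 _) (hP.second_pos 0).le) τ

theorem ratio_nonneg (hP : PropertyP Λ) (k j : ℕ) : 0 ≤ Λ k (j + 1) / Λ k 1 :=
  div_nonneg (hP.nonneg k _) (hP.second_pos k).le

theorem ratio_le_one (hP : PropertyP Λ) (k j : ℕ) : Λ k (j + 1) / Λ k 1 ≤ 1 :=
  div_le_one_of_le₀ (hP.anti k (Nat.le_add_left 1 j)) (hP.second_pos k).le

set_option maxHeartbeats 1000000 in
/-- The key per-coordinate bound: `∑ₙ λ(k,n)^{τ'} ≤ 1 + h_k^{τ'}·H` for any `τ' ≥ τ`. -/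
theorem factor_le (hP : PropertyP Λ) {τ τ' : ℝ} (hc : Cond3 Λ τ) (hττ' : τ ≤ τ') (k : ℕ) :
    (∑' n : ℕ, ENNReal.ofReal (Λ k n ^ τ')) ≤
      ENNReal.ofReal (1 + Λ k 1 ^ τ' * ∑' j : ℕ, (Λ 0 (j + 1) / Λ 0 1) ^ τ) := by
  set H := ∑' j : ℕ, (Λ 0 (j + 1) / Λ 0 1) ^ τ with hH
  have hk1 : 0 < Λ k 1 := hP.second_pos k
  have hHnn : 0 ≤ H := le_trans one_pos.le (one_le_H hP hc)
  have hcnn : 0 ≤ Λ k 1 ^ τ' := Real.rpow_nonneg hk1.le τ'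
  rw [tsum_eq_zero_add' ENNReal.summable, hP.first k, Real.one_rpow, ENNReal.ofReal_one,
    ENNReal.ofReal_add zero_le_one (mul_nonneg hcnn hHnn), ENNReal.ofReal_one]
  gcongr
  have hpt : ∀ n : ℕ, Λ k (n + 1) ^ τ' ≤ Λ k 1 ^ τ' * (Λ k (n + 1) / Λ k 1) ^ τ := by
    intro n
    have : Λ k (n + 1) ^ τ' = Λ k 1 ^ τ' * (Λ k (n + 1) / Λ k 1) ^ τ' := by
      rw [Real.div_rpow (hP.nonneg k _) hk1.le, mul_div_cancel₀]
      exact (Real.rpow_pos_of_pos hk1 τ').ne'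
    rw [this]
    exact mul_le_mul_of_nonneg_left
      (Real.rpow_le_rpow_of_exponent_ge' (ratio_nonneg hP k n) (ratio_le_one hP k n)
        hc.1.le hττ') hcnn
  calc (∑' n : ℕ, ENNReal.ofReal (Λ k (n + 1) ^ τ'))
      ≤ ∑' n : ℕ, ENNReal.ofReal (Λ k 1 ^ τ' * (Λ k (n + 1) / Λ k 1) ^ τ) :=
        ENNReal.tsum_le_tsum fun n => ENNReal.ofReal_le_ofReal (hpt n)
    _ = ENNReal.ofReal (Λ k 1 ^ τ') * ∑' n : ℕ, ENNReal.ofReal ((Λ k (n + 1) / Λ k 1) ^ τ) := by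
        simp_rw [ENNReal.ofReal_mul hcnn]; rw [ENNReal.tsum_mul_left]
    _ = ENNReal.ofReal (Λ k 1 ^ τ') *
          ENNReal.ofReal (∑' n : ℕ, (Λ k (n + 1) / Λ k 1) ^ τ) := by
        rw [ENNReal.ofReal_tsum_of_nonneg
          (fun n => Real.rpow_nonneg (ratio_nonneg hP k n) τ) (hc.2.1 k)]
    _ ≤ ENNReal.ofReal (Λ k 1 ^ τ') * ENNReal.ofReal H :=
        mul_le_mul_right (ENNReal.ofReal_le_ofReal (hc.2.2 k)) _
    _ = ENNReal.ofReal (Λ k 1 ^ τ' * H) := (ENNReal.ofReal_mul hcnn).symm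

/-- The fundamental counting estimate. -/
theorem count_le (hP : PropertyP Λ) {τ τ' : ℝ} (hc : Cond3 Λ τ) (hττ' : τ ≤ τ')
    (d : ℕ) {ε : ℝ} (hε : ε ∈ Set.Ioo (0 : ℝ) 1) :
    (infoCount Λ d ε : ℝ≥0∞) ≤ ENNReal.ofReal (ε ^ (-(2 * τ'))) *
      ∏ k : Fin d, ENNReal.ofReal (1 + Λ (k : ℕ) 1 ^ τ' *
        ∑' j : ℕ, (Λ 0 (j + 1) / Λ 0 1) ^ τ) := by
  obtain ⟨hε0, hε1⟩ := hε
  have hτ'pos : 0 < τ' := lt_of_lt_of_le hc.1 hττ'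
  set S := {j : Fin d → ℕ | ε ^ 2 < ∏ k : Fin d, Λ k.val (j k)} with hS
  -- pointwise bound on S
  have hpt : ∀ j : Fin d → ℕ, j ∈ S →
      (1 : ℝ≥0∞) ≤ ENNReal.ofReal (ε ^ (-(2 * τ'))) *
        ∏ k : Fin d, ENNReal.ofReal (Λ k.val (j k) ^ τ') := by
    intro j hj
    have hprod : (ε ^ 2 : ℝ) ^ τ' ≤ (∏ k : Fin d, Λ k.val (j k)) ^ τ' :=
      Real.rpow_le_rpow (by positivity) hj.le hτ'pos.le
    have he2 : (0:ℝ) < (ε ^ 2 : ℝ) ^ τ' := Real.rpow_pos_of_pos (by positivity) _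
    have h1 : (1 : ℝ) ≤ ε ^ (-(2 * τ')) * (∏ k : Fin d, Λ k.val (j k)) ^ τ' := by
      have hinv : ε ^ (-(2 * τ')) = ((ε ^ 2 : ℝ) ^ τ')⁻¹ := by
        rw [← Real.rpow_natCast ε 2, ← Real.rpow_mul hε0.le, ← Real.rpow_neg hε0.le]
        norm_num
      rw [hinv, ← div_eq_inv_mul, le_div_iff₀ he2, one_mul]
      exact hprod
    have hfac : (∏ k : Fin d, Λ k.val (j k)) ^ τ' = ∏ k : Fin d, Λ k.val (j k) ^ τ' :=
      (Real.finset_prod_rpow _ _ (fun k _ => hP.nonneg _ _) τ').symm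
    calc (1 : ℝ≥0∞) = ENNReal.ofReal 1 := ENNReal.ofReal_one.symm
      _ ≤ ENNReal.ofReal (ε ^ (-(2 * τ')) * (∏ k : Fin d, Λ k.val (j k)) ^ τ') :=
          ENNReal.ofReal_le_ofReal h1
      _ = ENNReal.ofReal (ε ^ (-(2 * τ'))) *
          ∏ k : Fin d, ENNReal.ofReal (Λ k.val (j k) ^ τ') := by
          rw [ENNReal.ofReal_mul (by positivity), hfac,
            ENNReal.ofReal_prod_of_nonneg (fun k _ => Real.rpow_nonneg (hP.nonneg _ _) τ')]
  -- card ≤ tsum over S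
  have hcard : (infoCount Λ d ε : ℝ≥0∞) ≤ ∑' j : S,
      (ENNReal.ofReal (ε ^ (-(2 * τ'))) *
        ∏ k : Fin d, ENNReal.ofReal (Λ k.val ((j : Fin d → ℕ) k) ^ τ')) := by
    by_cases hfin : S.Finite
    · haveI := hfin.fintype
      have h1 : (infoCount Λ d ε : ℝ≥0∞) = ∑' _ : S, (1 : ℝ≥0∞) := by
        rw [tsum_fintype]
        rw [Finset.sum_const, Finset.card_univ, nsmul_eq_mul, mul_one, infoCount,
          Nat.card_eq_fintype_card]
      rw [h1]
      exact ENNReal.tsum_le_tsum fun j => hpt j j.2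
    · have : infoCount Λ d ε = 0 := by
        simp only [infoCount]
        rw [Nat.card_coe_set_eq]
        exact Set.Infinite.ncard hfin
      rw [this]; simp
  refine hcard.trans ?_
  calc (∑' j : S, (ENNReal.ofReal (ε ^ (-(2 * τ'))) *
        ∏ k : Fin d, ENNReal.ofReal (Λ k.val ((j : Fin d → ℕ) k) ^ τ')))
      ≤ ∑' j : Fin d → ℕ, (ENNReal.ofReal (ε ^ (-(2 * τ'))) *
        ∏ k : Fin d, ENNReal.ofReal (Λ k.val (j k) ^ τ')) :=
        ENNReal.tsum_comp_le_tsum_of_injective Subtype.val_injective _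
    _ = ENNReal.ofReal (ε ^ (-(2 * τ'))) *
        ∑' j : Fin d → ℕ, ∏ k : Fin d, ENNReal.ofReal (Λ k.val (j k) ^ τ') :=
        ENNReal.tsum_mul_left
    _ = ENNReal.ofReal (ε ^ (-(2 * τ'))) *
        ∏ k : Fin d, ∑' n : ℕ, ENNReal.ofReal (Λ k.val n ^ τ') := by
        rw [tsum_pi_prod d fun k n => ENNReal.ofReal (Λ k.val n ^ τ')]
    _ ≤ _ := by
        gcongr with k
        exact factor_le hP hc hττ' k.val

end QPTAux

section MoreAux
open Filter Real Set
variable {Λ : ℕ → ℕ → ℝ}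

set_option maxHeartbeats 1000000 in
/-- Sufficiency: if some `h_{k₀} < 1` then the problem is QPT. -/
theorem isQPT_of_lt_one (hP : PropertyP Λ) (k₀ : ℕ) (hlt : Λ k₀ 1 < 1) : IsQPT Λ := by
  obtain ⟨τ, hc⟩ := hP.cond3
  set H := ∑' j : ℕ, (Λ 0 (j + 1) / Λ 0 1) ^ τ with hHdef
  have hH1 : 1 ≤ H := one_le_H hP hc
  have hH0 : 0 < H := lt_of_lt_of_le one_pos hH1
  have hlH : 0 ≤ Real.log H := Real.log_nonneg hH1
  set h := Λ k₀ 1 with hhdef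
  have hh0 : 0 < h := hP.second_pos k₀
  set a := -Real.log h with hadef
  have ha : 0 < a := neg_pos.mpr (Real.log_neg hh0 hlt)
  have hτ0 : 0 < τ := hc.1
  set M := τ + (1 + Real.log H) / a with hMdef
  have hM0 : 0 < M := by rw [hMdef]; positivity
  refine ⟨Real.exp 1 * (1 + H) ^ k₀, 2 * M, by positivity, by positivity, ?_⟩
  intro d hd ε hε
  obtain ⟨hε0, hε1⟩ := hε
  have hd0 : (0:ℝ) < d := by exact_mod_cast hd
  have hd1 : (1:ℝ) ≤ d := by exact_mod_cast hd
  have hD : 0 ≤ Real.log d := Real.log_nonneg hd1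
  set D := Real.log d with hDdef
  set L := Real.log ε⁻¹ with hLdef
  have hL : 0 < L := Real.log_pos (one_lt_inv_iff₀.mpr ⟨hε0, hε1⟩)
  set τ' := τ + (Real.log H + D) / a with hτ'def
  have hquot : 0 ≤ (Real.log H + D) / a := by positivity
  have hττ' : τ ≤ τ' := by rw [hτ'def]; linarith
  have hτ'0 : 0 < τ' := lt_of_lt_of_le hτ0 hττ'
  -- key rpow computation : h ^ τ' ≤ (H * d)⁻¹
  have hkey : h ^ τ' ≤ (H * d)⁻¹ := by
    have h1 : h ^ τ' = h ^ τ * h ^ ((Real.log H + D) / a) := by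
      rw [hτ'def, Real.rpow_add hh0]
    have hlha : Real.log h = -a := by rw [hadef, neg_neg]
    have h2 : h ^ ((Real.log H + D) / a) = (H * d)⁻¹ := by
      rw [Real.rpow_def_of_pos hh0, hlha]
      have harg : -a * ((Real.log H + D) / a) = -(Real.log H + D) := by
        field_simp
      rw [harg, Real.exp_neg]
      congr 1
      rw [← Real.log_mul hH0.ne' hd0.ne', Real.exp_log (by positivity)]
    have h3 : h ^ τ ≤ 1 := Real.rpow_le_one hh0.le hlt.le hτ0.le
    calc h ^ τ' = h ^ τ * h ^ ((Real.log H + D) / a) := h1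
      _ ≤ 1 * (H * d)⁻¹ := by
          rw [h2]
          exact mul_le_mul_of_nonneg_right h3 (by positivity)
      _ = (H * d)⁻¹ := one_mul _
  -- product bound
  have hprod : (∏ k ∈ Finset.range d, (1 + Λ k 1 ^ τ' * H)) ≤ (1 + H) ^ k₀ * Real.exp 1 := by
    have hstep : ∀ k ∈ Finset.range d, (1 + Λ k 1 ^ τ' * H) ≤
        (if k < k₀ then 1 + H else 1 + 1/(d:ℝ)) := by
      intro k _
      by_cases hk : k < k₀
      · simp only [hk, if_true]
        have h1 : Λ k 1 ^ τ' ≤ 1 :=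
          Real.rpow_le_one (hP.second_pos k).le (h_le_one hP k) hτ'0.le
        nlinarith
      · simp only [hk, if_false]
        push_neg at hk
        have h1 : Λ k 1 ≤ h := hP.h_anti hk
        have h2 : Λ k 1 ^ τ' ≤ h ^ τ' :=
          Real.rpow_le_rpow (hP.second_pos k).le h1 hτ'0.le
        have h3 : Λ k 1 ^ τ' * H ≤ (H * d)⁻¹ * H :=
          mul_le_mul_of_nonneg_right (h2.trans hkey) hH0.le
        have h4 : (H * (d:ℝ))⁻¹ * H = 1/(d:ℝ) := by
          field_simp
        linarith [h3, h4.le]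
    have hposfac : ∀ k ∈ Finset.range d, (0:ℝ) ≤ 1 + Λ k 1 ^ τ' * H := by
      intro k _
      have : 0 ≤ Λ k 1 ^ τ' * H :=
        mul_nonneg (Real.rpow_nonneg (hP.nonneg k 1) τ') hH0.le
      linarith
    have hcard1 : ((Finset.range d).filter (· < k₀)).card ≤ k₀ := by
      refine le_trans (Finset.card_le_card ?_) (Finset.card_range k₀).le
      intro x hx
      simp only [Finset.mem_filter, Finset.mem_range] at hx ⊢
      exact hx.2
    have hcard2 : ((Finset.range d).filter (fun k => ¬ k < k₀)).card ≤ d := by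
      refine le_trans (Finset.card_le_card (Finset.filter_subset _ _)) ?_
      simp
    have hb1 : ((1:ℝ) + H) ^ ((Finset.range d).filter (· < k₀)).card ≤ (1 + H) ^ k₀ :=
      pow_le_pow_right₀ (by linarith) hcard1
    have hb2 : ((1:ℝ) + 1/(d:ℝ)) ^ ((Finset.range d).filter (fun k => ¬ k < k₀)).card
        ≤ Real.exp 1 := by
      have s1 : ((1:ℝ) + 1/(d:ℝ)) ^ ((Finset.range d).filter (fun k => ¬ k < k₀)).card
          ≤ ((1:ℝ) + 1/(d:ℝ)) ^ d := by
        refine pow_le_pow_right₀ ?_ hcard2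
        have : (0:ℝ) ≤ 1/(d:ℝ) := by positivity
        linarith
      have s2 : ((1:ℝ) + 1/(d:ℝ)) ^ d ≤ Real.exp (1/(d:ℝ)) ^ d := by
        refine pow_le_pow_left₀ (by positivity) ?_ d
        have := Real.add_one_le_exp (1/(d:ℝ))
        linarith
      have s3 : Real.exp (1/(d:ℝ)) ^ d = Real.exp 1 := by
        rw [← Real.exp_nat_mul]
        congr 1
        field_simp
      linarith
    calc (∏ k ∈ Finset.range d, (1 + Λ k 1 ^ τ' * H))
        ≤ ∏ k ∈ Finset.range d, (if k < k₀ then 1 + H else 1 + 1/(d:ℝ)) :=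
          Finset.prod_le_prod hposfac hstep
      _ = (1 + H) ^ ((Finset.range d).filter (· < k₀)).card *
            (1 + 1/(d:ℝ)) ^ ((Finset.range d).filter (fun k => ¬ k < k₀)).card := by
          rw [Finset.prod_ite, Finset.prod_const, Finset.prod_const]
      _ ≤ (1 + H) ^ k₀ * Real.exp 1 :=
          mul_le_mul hb1 hb2 (by positivity) (by positivity)
  -- epsilon bound
  have hεbound : ε ^ (-(2 * τ')) ≤ Real.exp ((2 * M) * (1 + D) * (1 + L)) := by
    have h1 : ε ^ (-(2 * τ')) = Real.exp (2 * τ' * L) := by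
      rw [Real.rpow_def_of_pos hε0, hLdef, Real.log_inv]
      ring_nf
    rw [h1]
    apply Real.exp_le_exp.mpr
    have key : τ' ≤ M * (1 + D) := by
      have e1 : Real.log H + D ≤ (1 + Real.log H) * (1 + D) := by nlinarith
      have e2 : (Real.log H + D) / a ≤ ((1 + Real.log H) * (1 + D)) / a :=
        div_le_div_of_nonneg_right e1 ha.le
      have e3 : M * (1 + D) = τ * (1 + D) + ((1 + Real.log H) / a) * (1 + D) := by
        rw [hMdef]; ring
      have e4 : τ ≤ τ * (1 + D) := by nlinarith
      have e5 : ((1 + Real.log H) * (1 + D)) / a = ((1 + Real.log H) / a) * (1 + D) := by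
        ring
      rw [hτ'def, e3]
      rw [e5] at e2
      linarith
    have h2 : 2 * τ' * L ≤ 2 * M * (1 + D) * L := by
      have := mul_le_mul_of_nonneg_right (by linarith : 2 * τ' ≤ 2 * (M * (1 + D))) hL.le
      linarith
    have h3 : 2 * M * (1 + D) * L ≤ 2 * M * (1 + D) * (1 + L) := by
      have hnn : 0 ≤ 2 * M * (1 + D) := by positivity
      nlinarith
    linarith
  -- put it together
  have hmain := count_le hP hc hττ' d ⟨hε0, hε1⟩
  have hterm : ∀ k : Fin d, (0:ℝ) ≤ 1 + Λ (k:ℕ) 1 ^ τ' * H := by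
    intro k
    have : 0 ≤ Λ (k:ℕ) 1 ^ τ' * H :=
      mul_nonneg (Real.rpow_nonneg (hP.nonneg _ 1) τ') hH0.le
    linarith
  have hfin : (infoCount Λ d ε : ℝ≥0∞) ≤ ENNReal.ofReal (Real.exp 1 * (1 + H) ^ k₀ *
      Real.exp ((2 * M) * (1 + Real.log d) * (1 + Real.log ε⁻¹))) := by
    refine hmain.trans ?_
    rw [← ENNReal.ofReal_prod_of_nonneg (fun k _ => hterm k),
      ← ENNReal.ofReal_mul (by positivity)]
    apply ENNReal.ofReal_le_ofReal
    have hprod' : (∏ k : Fin d, (1 + Λ (k:ℕ) 1 ^ τ' * H)) ≤ (1 + H) ^ k₀ * Real.exp 1 := by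
      rw [Fin.prod_univ_eq_prod_range (fun k => (1 + Λ k 1 ^ τ' * H)) d]
      exact hprod
    have hmm : ε ^ (-(2 * τ')) * (∏ k : Fin d, (1 + Λ (k:ℕ) 1 ^ τ' * H))
        ≤ Real.exp ((2 * M) * (1 + D) * (1 + L)) * ((1 + H) ^ k₀ * Real.exp 1) :=
      mul_le_mul hεbound hprod' (Finset.prod_nonneg fun k _ => hterm k) (by positivity)
    calc ε ^ (-(2 * τ')) * ∏ k : Fin d, (1 + Λ (k:ℕ) 1 ^ τ' * H)
        ≤ Real.exp ((2 * M) * (1 + D) * (1 + L)) * ((1 + H) ^ k₀ * Real.exp 1) := hmm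
      _ = Real.exp 1 * (1 + H) ^ k₀ *
            Real.exp ((2 * M) * (1 + Real.log d) * (1 + Real.log ε⁻¹)) := by
          rw [hDdef, hLdef]; ring
  have hR : (0:ℝ) ≤ Real.exp 1 * (1 + H) ^ k₀ *
      Real.exp ((2 * M) * (1 + Real.log d) * (1 + Real.log ε⁻¹)) := by positivity
  rw [← ENNReal.ofReal_le_ofReal_iff hR, ENNReal.ofReal_natCast]
  exact hfin

end MoreAux

section NegAux
open Filter Real Set
variable {Λ : ℕ → ℕ → ℝ}

/-- Each one-dimensional superlevel set is finite. -/
theorem levelset_finite (hP : PropertyP Λ) (k : ℕ) {c : ℝ} (hc0 : 0 < c) :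
    {n : ℕ | c < Λ k n}.Finite := by
  obtain ⟨τ, hτ0, hsum, _⟩ := hP.cond3
  -- there is N with Λ k N ≤ c
  have hN : ∃ N, Λ k N ≤ c := by
    by_contra hcon
    push_neg at hcon
    have hten : Filter.Tendsto (fun n : ℕ => (Λ k (n + 1) / Λ k 1) ^ τ) atTop (nhds 0) :=
      (hsum k).tendsto_atTop_zero
    have hpos : (0:ℝ) < (c / Λ k 1) ^ τ :=
      Real.rpow_pos_of_pos (div_pos hc0 (hP.second_pos k)) τ
    have hlow : ∀ n : ℕ, (c / Λ k 1) ^ τ ≤ (Λ k (n + 1) / Λ k 1) ^ τ := by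
      intro n
      refine Real.rpow_le_rpow (div_nonneg hc0.le (hP.second_pos k).le) ?_ hτ0.le
      exact div_le_div_of_nonneg_right (hcon (n + 1)).le (hP.second_pos k).le
    obtain ⟨n, hn⟩ := ((hten.eventually_lt_const hpos).and
      (Filter.Eventually.of_forall hlow)).exists
    exact absurd hn.2 (not_le.mpr hn.1)
  obtain ⟨N, hN⟩ := hN
  refine Set.Finite.subset (Set.finite_Iio N) ?_
  intro n hn
  simp only [Set.mem_setOf_eq] at hn
  simp only [Set.mem_Iio]
  by_contra hcon
  push_neg at hcon
  exact absurd (le_trans (hP.anti k hcon) hN) (not_le.mpr hn)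

/-- The counting set is finite. -/
theorem countSet_finite (hP : PropertyP Λ) (d : ℕ) {ε : ℝ} (hε0 : 0 < ε) :
    {j : Fin d → ℕ | ε ^ 2 < ∏ k : Fin d, Λ k.val (j k)}.Finite := by
  have hc0 : (0:ℝ) < ε ^ 2 := by positivity
  refine Set.Finite.subset (Set.Finite.pi (t := fun k : Fin d => {n : ℕ | ε ^ 2 < Λ k.val n})
    (fun k => levelset_finite hP k.val hc0)) ?_
  intro j hj
  simp only [Set.mem_setOf_eq] at hj
  intro k _
  simp only [Set.mem_setOf_eq]
  -- product is at most the k-th factor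
  have h1 : ∏ i : Fin d, Λ i.val (j i) ≤ Λ k.val (j k) := by
    rw [← Finset.mul_prod_erase Finset.univ (fun i : Fin d => Λ i.val (j i))
      (Finset.mem_univ k)]
    have h2 : ∏ i ∈ Finset.univ.erase k, Λ i.val (j i) ≤ 1 :=
      Finset.prod_le_one (fun i _ => hP.nonneg _ _)
        (fun i _ => (hP.first i.val) ▸ hP.anti i.val (Nat.zero_le _))
    nlinarith [hP.nonneg k.val (j k)]
  exact lt_of_lt_of_le hj h1

/-- If all `h_k = 1` then `2^d ≤ n(ε,d)`. -/
theorem two_pow_le_infoCount (hP : PropertyP Λ) (hall : ∀ k, Λ k 1 = 1) (d : ℕ)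
    {ε : ℝ} (hε : ε ∈ Set.Ioo (0:ℝ) 1) : 2 ^ d ≤ infoCount Λ d ε := by
  obtain ⟨hε0, hε1⟩ := hε
  have hε2 : ε ^ 2 < 1 := by nlinarith
  set S := {j : Fin d → ℕ | ε ^ 2 < ∏ k : Fin d, Λ k.val (j k)} with hS
  have hfin : S.Finite := countSet_finite hP d hε0
  haveI : Finite ↥S := hfin.to_subtype
  have hg : ∀ j : Fin d → Fin 2, (fun k => ((j k : ℕ))) ∈ S := by
    intro j
    simp only [hS, Set.mem_setOf_eq]
    have : ∀ k : Fin d, Λ k.val ((j k : ℕ)) = 1 := by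
      intro k
      have hjk : (j k : ℕ) = 0 ∨ (j k : ℕ) = 1 := by
        have := (j k).isLt
        omega
      rcases hjk with h | h
      · rw [h]; exact hP.first k.val
      · rw [h]; exact hall k.val
    rw [Finset.prod_congr rfl (fun k _ => this k), Finset.prod_const_one]
    exact hε2
  have hinj : Function.Injective (fun j : Fin d → Fin 2 => (⟨fun k => ((j k : ℕ)), hg j⟩ : S)) := by
    intro j j' hjj'
    funext k
    have := congrArg (fun f => (f : Fin d → ℕ) k) (Subtype.ext_iff.mp hjj')
    exact Fin.val_injective this
  have := Nat.card_le_card_of_injective _ hinj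
  have h2 : Nat.card (Fin d → Fin 2) = 2 ^ d := by simp [Nat.card_eq_fintype_card]
  rw [h2] at this
  exact this

/-- If all `h_k = 1` the problem is not QPT. -/
theorem not_isQPT_of_all_one (hP : PropertyP Λ) (hall : ∀ k, Λ k 1 = 1) : ¬ IsQPT Λ := by
  rintro ⟨C, t, hC, ht, hb⟩
  set s := t * (1 + Real.log 2) with hsdef
  have hs0 : 0 < s := by
    have : (0:ℝ) < 1 + Real.log 2 := by positivity
    positivity
  set K := Real.exp s with hKdef
  -- asymptotics : x^s * exp(-(log 2) x) → 0
  have htend : Filter.Tendsto (fun x : ℝ => x ^ s * Real.exp (-(Real.log 2) * x))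
      atTop (nhds 0) :=
    tendsto_rpow_mul_exp_neg_mul_atTop_nhds_zero s (Real.log 2) (Real.log_pos one_lt_two)
  have htendN : Filter.Tendsto (fun d : ℕ => ((d:ℝ)) ^ s * Real.exp (-(Real.log 2) * d))
      atTop (nhds 0) := htend.comp tendsto_natCast_atTop_atTop
  have hsmall : ∀ᶠ d : ℕ in atTop, ((d:ℝ)) ^ s * Real.exp (-(Real.log 2) * d) < (C * K)⁻¹ :=
    htendN.eventually_lt_const (by positivity)
  obtain ⟨d, hd1, hd2⟩ := (hsmall.and (Filter.eventually_ge_atTop 1)).exists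
  have hd0' : (0:ℝ) < d := by exact_mod_cast hd2
  have hhalf : (1/2 : ℝ) ∈ Set.Ioo (0:ℝ) 1 := by norm_num
  have hub := hb d hd2 (1/2) hhalf
  have hlb : ((2:ℝ)) ^ d ≤ (infoCount Λ d (1/2) : ℝ) := by
    have := two_pow_le_infoCount hP hall d hhalf
    exact_mod_cast this
  have hlog : Real.log ((1/2 : ℝ))⁻¹ = Real.log 2 := by norm_num
  have hexp : C * Real.exp (t * (1 + Real.log d) * (1 + Real.log ((1/2:ℝ))⁻¹))
      = C * K * (d:ℝ) ^ s := by
    rw [hlog]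
    have h1 : t * (1 + Real.log d) * (1 + Real.log 2) = s + s * Real.log d := by
      rw [hsdef]; ring
    have h2 : Real.exp (s * Real.log d) = (d:ℝ) ^ s := by
      rw [Real.rpow_def_of_pos hd0', mul_comm]
    rw [h1, Real.exp_add, h2, hKdef]
    ring
  have hCK : (0:ℝ) < C * K := by positivity
  have hE : (0:ℝ) < Real.exp (Real.log 2 * (d:ℝ)) := Real.exp_pos _
  have hEneg : Real.exp (-(Real.log 2) * (d:ℝ)) = (Real.exp (Real.log 2 * (d:ℝ)))⁻¹ := by
    rw [← Real.exp_neg]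
    ring_nf
  rw [hEneg, ← div_eq_mul_inv, div_lt_iff₀ hE] at hd1
  have h2d : ((2:ℝ)) ^ d = Real.exp (Real.log 2 * (d:ℝ)) := by
    rw [mul_comm, Real.exp_nat_mul, Real.exp_log two_pos]
  have hfinal : C * K * (d:ℝ) ^ s < ((2:ℝ)) ^ d := by
    rw [h2d]
    calc C * K * (d:ℝ) ^ s < C * K * ((C * K)⁻¹ * Real.exp (Real.log 2 * (d:ℝ))) :=
          mul_lt_mul_of_pos_left hd1 hCK
      _ = Real.exp (Real.log 2 * (d:ℝ)) := by
          rw [← mul_assoc, mul_inv_cancel₀ hCK.ne', one_mul]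
  have : ((2:ℝ)) ^ d < ((2:ℝ)) ^ d :=
    lt_of_le_of_lt (hlb.trans (hub.trans_eq hexp)) hfinal
  exact absurd this (lt_irrefl _)

end NegAux

section LimsupAux
open Filter Real Set
variable {Λ : ℕ → ℕ → ℝ}

theorem limsup_pos_iff_not_all_one (hP : PropertyP Λ) :
    (0 < Filter.limsup (fun k : ℕ => (Real.log (Λ k 1)⁻¹ : EReal)) Filter.atTop) ↔
      ¬ ∀ k : ℕ, Λ k 1 = 1 := by
  constructor
  · intro hpos hall
    have : (fun k : ℕ => (Real.log (Λ k 1)⁻¹ : EReal)) = fun _ => (0 : EReal) := by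
      funext k
      rw [hall k]
      norm_num
    rw [this, Filter.limsup_const] at hpos
    exact absurd hpos (lt_irrefl _)
  · intro hnall
    push_neg at hnall
    obtain ⟨k₀, hk₀⟩ := hnall
    have hlt : Λ k₀ 1 < 1 := lt_of_le_of_ne (h_le_one hP k₀) hk₀
    set c := Real.log (Λ k₀ 1)⁻¹ with hcdef
    have hc0 : 0 < c := by
      rw [hcdef, Real.log_inv]
      have := Real.log_neg (hP.second_pos k₀) hlt
      linarith
    have hev : ∀ᶠ k in (Filter.atTop : Filter ℕ),
        (c : EReal) ≤ (Real.log (Λ k 1)⁻¹ : EReal) := by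
      filter_upwards [Filter.eventually_ge_atTop k₀] with k hk
      have h1 : Λ k 1 ≤ Λ k₀ 1 := hP.h_anti hk
      have h2 : Real.log (Λ k 1) ≤ Real.log (Λ k₀ 1) :=
        Real.log_le_log (hP.second_pos k) h1
      rw [EReal.coe_le_coe_iff, hcdef, Real.log_inv, Real.log_inv]
      linarith
    have hle : (c : EReal) ≤ Filter.limsup (fun k : ℕ => (Real.log (Λ k 1)⁻¹ : EReal))
        Filter.atTop := by
      rw [Filter.limsup_eq]
      refine le_sInf ?_
      intro b hb
      simp only [Set.mem_setOf_eq] at hb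
      obtain ⟨k, hk1, hk2⟩ := (hev.and hb).exists
      exact le_trans hk1 hk2
    calc (0 : EReal) < (c : EReal) := by exact_mod_cast hc0
      _ ≤ _ := hle

end LimsupAux

/-- Under Property (P), with `B = lim_{d→∞} ln(h_d⁻¹)` (which exists in `[0,∞]` by
monotonicity of `(h_k)`, and equals the limsup used here), the problem is
quasi-polynomially tractable iff `B > 0`, which holds iff `h_k` is not identically `1`. -/
theorem qpt_iff_B_pos (Λ : ℕ → ℕ → ℝ) (hP : PropertyP Λ) :
    (IsQPT Λ ↔
      0 < Filter.limsup (fun k : ℕ => (Real.log (Λ k 1)⁻¹ : EReal)) Filter.atTop) ∧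
    ((0 < Filter.limsup (fun k : ℕ => (Real.log (Λ k 1)⁻¹ : EReal)) Filter.atTop) ↔
      ¬ ∀ k : ℕ, Λ k 1 = 1) := by
  have hiff2 := limsup_pos_iff_not_all_one hP
  refine ⟨?_, hiff2⟩
  rw [hiff2]
  constructor
  · intro hq hall
    exact not_isQPT_of_all_one hP hall hq
  · intro hnall
    push_neg at hnall
    obtain ⟨k₀, hk₀⟩ := hnall
    exact isQPT_of_lt_one hP k₀ (lt_of_le_of_ne (h_le_one hP k₀) hk₀)
end
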